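/- Let n ≥ 1 and consider a colouring of the edges of the complete graph K_n with colours red and blue; let G denote the resulting edge-coloured graph and let R denote the simple graph formed by the red edges. Then hom(P_3^A, G) + hom(P_3, R) ≤ hom(K_2, R)^2, where hom(P_3^A, G) is the number of edge-coloured homomorphisms from the alternating path P_3^A to G, hom(P_3, R) is the number of graph homomorphisms from the path with 3 edges to R (equivalently, the number of walks of length 3 in R), and hom(K_2, R) = 2·e_R is twice the number of red edges. -/

import Mathlib

/-- An edge-coloured graph: a finite vertex set with a red graph and a blue
graph whose edge sets are disjoint. -/
structure EdgeColouredGraph where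
  V : Type
  fintypeV : Fintype V
  red : SimpleGraph V
  blue : SimpleGraph V
  disjoint : ∀ u v : V, ¬ (red.Adj u v ∧ blue.Adj u v)

attribute [instance] EdgeColouredGraph.fintypeV

/-- A homomorphism of edge-coloured graphs sends red edges to red edges and
blue edges to blue edges. -/
def IsHom (H G : EdgeColouredGraph) (φ : H.V → G.V) : Prop :=
  (∀ ⦃u v⦄, H.red.Adj u v → G.red.Adj (φ u) (φ v)) ∧
  (∀ ⦃u v⦄, H.blue.Adj u v → G.blue.Adj (φ u) (φ v))

/-- The number of homomorphisms from `H` to `G`. -/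
noncomputable def homCount (H G : EdgeColouredGraph) : ℕ :=
  Nat.card {φ : H.V → G.V // IsHom H G φ}

/-- The homomorphism density `t(H,G)`. -/
noncomputable def homDensity (H G : EdgeColouredGraph) : ℝ :=
  (homCount H G : ℝ) / (Nat.card G.V : ℝ) ^ (Nat.card H.V)

/-- The alternating path `P_k^A`, with vertices `v_0, …, v_k`, the edge
`v_i v_{i+1}` being red for even `i` and blue for odd `i`. -/
def altPath (k : ℕ) : EdgeColouredGraph where
  V := Fin (k + 1)
  fintypeV := inferInstance
  red := SimpleGraph.fromRel (fun i j => (i : ℕ) + 1 = (j : ℕ) ∧ Even (i : ℕ))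
  blue := SimpleGraph.fromRel (fun i j => (i : ℕ) + 1 = (j : ℕ) ∧ Odd (i : ℕ))
  disjoint := by
    rintro u v ⟨⟨-, hr⟩, ⟨-, hb⟩⟩
    rcases hr with ⟨h1, h2⟩ | ⟨h1, h2⟩ <;> rcases hb with ⟨h3, h4⟩ | ⟨h3, h4⟩ <;>
      simp only [Nat.even_iff, Nat.odd_iff] at h2 h4 <;> omega

/-- The number of red edges of `F`. -/
noncomputable def eRed (F : EdgeColouredGraph) : ℕ := Nat.card F.red.edgeSet

/-- The number of blue edges of `F`. -/
noncomputable def eBlue (F : EdgeColouredGraph) : ℕ := Nat.card F.blue.edgeSet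

/-- The total number of edges of `F`. -/
noncomputable def eTotal (F : EdgeColouredGraph) : ℕ := eRed F + eBlue F


def edgeHom {V : Type} (R : SimpleGraph V) {a b : V} (h : R.Adj a b) :
    (⊤ : SimpleGraph (Fin 2)) →g R where
  toFun i := if i = 0 then a else b
  map_rel' := by
    intro u v huv
    simp only [SimpleGraph.top_adj] at huv
    fin_cases u <;> fin_cases v <;> simp_all <;> first | exact h | exact h.symm

@[simp] lemma edgeHom_zero {V : Type} (R : SimpleGraph V) {a b : V} (h : R.Adj a b) :
    edgeHom R h 0 = a := rfl

@[simp] lemma edgeHom_one {V : Type} (R : SimpleGraph V) {a b : V} (h : R.Adj a b) :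
    edgeHom R h 1 = b := rfl

/-- For a red/blue colouring of the edges of the complete graph `K_n`
(`n ≥ 1`), with `G` the resulting edge-coloured graph and `R` the graph of red edges,
`hom(P_3^A, G) + hom(P_3, R) ≤ hom(K_2, R)^2`. -/
theorem altPathThree_plus_pathThree_le (n : ℕ) (hn : 1 ≤ n) (G : EdgeColouredGraph)
    (hcard : Nat.card G.V = n)
    (hcomplete : G.red ⊔ G.blue = ⊤) :
    homCount (altPath 3) G + Nat.card (SimpleGraph.pathGraph 4 →g G.red)
      ≤ Nat.card ((⊤ : SimpleGraph (Fin 2)) →g G.red) ^ 2 := by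
  classical
  have hred01 : (altPath 3).red.Adj ⟨0, by omega⟩ ⟨1, by omega⟩ := by
    simp [altPath, SimpleGraph.fromRel_adj]
  have hred32 : (altPath 3).red.Adj ⟨3, by omega⟩ ⟨2, by omega⟩ := by
    simp only [altPath, SimpleGraph.fromRel_adj]
    exact ⟨Fin.ne_of_val_ne (by norm_num), Or.inr ⟨trivial, even_two⟩⟩
  have hblue12 : (altPath 3).blue.Adj ⟨1, by omega⟩ ⟨2, by omega⟩ := by
    simp [altPath, SimpleGraph.fromRel_adj]
  have hp01 : (SimpleGraph.pathGraph 4).Adj ⟨0, by omega⟩ ⟨1, by omega⟩ := by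
    rw [SimpleGraph.pathGraph_adj]; left; rfl
  have hp32 : (SimpleGraph.pathGraph 4).Adj ⟨3, by omega⟩ ⟨2, by omega⟩ := by
    rw [SimpleGraph.pathGraph_adj]; right; rfl
  have hp12 : (SimpleGraph.pathGraph 4).Adj ⟨1, by omega⟩ ⟨2, by omega⟩ := by
    rw [SimpleGraph.pathGraph_adj]; left; rfl
  haveI : Finite (SimpleGraph.pathGraph 4 →g G.red) :=
    Finite.of_injective (fun f => (f : Fin 4 → G.V)) DFunLike.coe_injective
  haveI : Finite ((⊤ : SimpleGraph (Fin 2)) →g G.red) :=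
    Finite.of_injective (fun f => (f : Fin 2 → G.V)) DFunLike.coe_injective
  set A := {φ : (altPath 3).V → G.V // IsHom (altPath 3) G φ}
  set B := (SimpleGraph.pathGraph 4 →g G.red)
  set C := ((⊤ : SimpleGraph (Fin 2)) →g G.red)
  let f : A ⊕ B → C × C := fun x =>
    match x with
    | Sum.inl φ => (edgeHom G.red (φ.2.1 hred01), edgeHom G.red (φ.2.1 hred32))
    | Sum.inr ψ => (edgeHom G.red (ψ.map_rel hp01), edgeHom G.red (ψ.map_rel hp32))
  have hf : Function.Injective f := by
    rintro (⟨φ, hφ⟩ | ψ) (⟨φ', hφ'⟩ | ψ') hxy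
    · simp only [f, Prod.mk.injEq] at hxy
      obtain ⟨h1, h2⟩ := hxy
      have e0 := DFunLike.congr_fun h1 0
      have e1 := DFunLike.congr_fun h1 1
      have e3 := DFunLike.congr_fun h2 0
      have e2 := DFunLike.congr_fun h2 1
      rw [edgeHom_zero, edgeHom_zero] at e0 e3; rw [edgeHom_one, edgeHom_one] at e1 e2
      refine congrArg Sum.inl (Subtype.ext (funext fun i => ?_))
      fin_cases i <;> assumption
    · exfalso
      simp only [f, Prod.mk.injEq] at hxy
      obtain ⟨h1, h2⟩ := hxy
      have e1 : φ ⟨1, by omega⟩ = ψ' ⟨1, by omega⟩ := DFunLike.congr_fun h1 1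
      have e2 : φ ⟨2, by omega⟩ = ψ' ⟨2, by omega⟩ := DFunLike.congr_fun h2 1
      have hr : G.red.Adj (φ ⟨1, by omega⟩) (φ ⟨2, by omega⟩) := by
        rw [e1, e2]; exact ψ'.map_rel hp12
      exact G.disjoint _ _ ⟨hr, hφ.2 hblue12⟩
    · exfalso
      simp only [f, Prod.mk.injEq] at hxy
      obtain ⟨h1, h2⟩ := hxy
      have e1 : ψ ⟨1, by omega⟩ = φ' ⟨1, by omega⟩ := DFunLike.congr_fun h1 1
      have e2 : ψ ⟨2, by omega⟩ = φ' ⟨2, by omega⟩ := DFunLike.congr_fun h2 1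
      have hr : G.red.Adj (φ' ⟨1, by omega⟩) (φ' ⟨2, by omega⟩) := by
        rw [← e1, ← e2]; exact ψ.map_rel hp12
      exact G.disjoint _ _ ⟨hr, hφ'.2 hblue12⟩
    · simp only [f, Prod.mk.injEq] at hxy
      obtain ⟨h1, h2⟩ := hxy
      have e0 := DFunLike.congr_fun h1 0
      have e1 := DFunLike.congr_fun h1 1
      have e3 := DFunLike.congr_fun h2 0
      have e2 := DFunLike.congr_fun h2 1
      rw [edgeHom_zero, edgeHom_zero] at e0 e3; rw [edgeHom_one, edgeHom_one] at e1 e2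
      refine congrArg Sum.inr (DFunLike.ext _ _ fun i => ?_)
      fin_cases i <;> assumption
  calc homCount (altPath 3) G + Nat.card B = Nat.card (A ⊕ B) := (Nat.card_sum).symm
    _ ≤ Nat.card (C × C) := Nat.card_le_card_of_injective f hf
    _ = Nat.card C ^ 2 := by rw [Nat.card_prod, sq]
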